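/- arXiv:1102.1162 — 4 statements merged into one kernel-verified Lean document; each statement's English description precedes it below -/
import Mathlib

section
/- Let (Ω, F, P) be a probability space, f : Ω → ℝ a nonnegative integrable function with E[f] > 0, and g : Ω → ℝ measurable with e^g integrable and f·g, f·log f integrable. Then E[f·g] ≤ E[f]·log E[e^g] + E[f·log f] − E[f]·log E[f]. -/
open MeasureTheory

lemma young_aux (x y A : ℝ) (hx : 0 ≤ x) (hA : 0 < A) :
    x * y ≤ x * Real.log x - x * Real.log A - x + A * Real.exp y := by
  rcases hx.eq_or_lt with h | h
  · simp [← h]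
    positivity
  · have key : (y - Real.log x + Real.log A) + 1 ≤ Real.exp y * A / x := by
      calc (y - Real.log x + Real.log A) + 1
          ≤ Real.exp (y - Real.log x + Real.log A) :=
            Real.add_one_le_exp _
        _ = Real.exp y * A / x := by
            rw [Real.exp_add, Real.exp_sub, Real.exp_log h, Real.exp_log hA]
            ring
    have h2 : x * ((y - Real.log x + Real.log A) + 1) ≤ Real.exp y * A := by
      calc x * ((y - Real.log x + Real.log A) + 1)
          ≤ x * (Real.exp y * A / x) := mul_le_mul_of_nonneg_left key h.le
        _ = Real.exp y * A := by field_simp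
    nlinarith [h2]

/-- Entropy inequality: `E[f g] ≤ E[f] log E[e^g] + E[f log f] - E[f] log E[f]`. -/
theorem entropy_inequality
    {Ω : Type*} [MeasurableSpace Ω] (P : Measure Ω) [IsProbabilityMeasure P]
    (f g : Ω → ℝ)
    (hf_nonneg : ∀ ω, 0 ≤ f ω)
    (hf_int : Integrable f P)
    (hf_pos : 0 < ∫ ω, f ω ∂P)
    (hg_meas : Measurable g)
    (heg_int : Integrable (fun ω => Real.exp (g ω)) P)
    (hfg_int : Integrable (fun ω => f ω * g ω) P)
    (hflf_int : Integrable (fun ω => f ω * Real.log (f ω)) P) :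
    ∫ ω, f ω * g ω ∂P ≤
      (∫ ω, f ω ∂P) * Real.log (∫ ω, Real.exp (g ω) ∂P)
        + ∫ ω, f ω * Real.log (f ω) ∂P
        - (∫ ω, f ω ∂P) * Real.log (∫ ω, f ω ∂P) := by
  set A := ∫ ω, f ω ∂P with hA
  set M := ∫ ω, Real.exp (g ω) ∂P with hM
  have hMpos : 0 < M := integral_exp_pos heg_int
  have hpt : ∀ ω, f ω * g ω ≤
      f ω * Real.log (f ω) - f ω * Real.log A - f ω + (A / M) * Real.exp (g ω)
        + f ω * Real.log M := by
    intro ω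
    have hy := young_aux (f ω) (g ω - Real.log M) A (hf_nonneg ω) hf_pos
    have hexp : Real.exp (g ω - Real.log M) = Real.exp (g ω) / M := by
      rw [Real.exp_sub, Real.exp_log hMpos]
    rw [hexp] at hy
    have h2 : f ω * g ω = f ω * (g ω - Real.log M) + f ω * Real.log M := by ring
    rw [h2]
    have h3 : A * (Real.exp (g ω) / M) = (A / M) * Real.exp (g ω) := by ring
    rw [h3] at hy
    linarith
  have hi1 : Integrable (fun ω => f ω * Real.log (f ω) - f ω * Real.log A) P :=
    hflf_int.sub (hf_int.mul_const _)
  have hi2 : Integrable (fun ω => f ω * Real.log (f ω) - f ω * Real.log A - f ω) P :=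
    hi1.sub hf_int
  have hi3 : Integrable
      (fun ω => f ω * Real.log (f ω) - f ω * Real.log A - f ω + (A / M) * Real.exp (g ω)) P :=
    hi2.add (heg_int.const_mul (A / M))
  have hi4 : Integrable (fun ω => f ω * Real.log (f ω) - f ω * Real.log A - f ω
      + (A / M) * Real.exp (g ω) + f ω * Real.log M) P :=
    hi3.add (hf_int.mul_const (Real.log M))
  have hmono := integral_mono hfg_int hi4 hpt
  have hcalc : ∫ ω, (f ω * Real.log (f ω) - f ω * Real.log A - f ω + (A / M) * Real.exp (g ω)
        + f ω * Real.log M) ∂P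
      = (∫ ω, f ω * Real.log (f ω) ∂P) - A * Real.log A - A + (A / M) * M + A * Real.log M := by
    rw [integral_add hi3 (hf_int.mul_const _), integral_add hi2 (heg_int.const_mul _),
      integral_sub hi1 hf_int, integral_sub hflf_int (hf_int.mul_const _),
      integral_mul_const, integral_mul_const, integral_const_mul]
  rw [hcalc] at hmono
  have hAM : (A / M) * M = A := by field_simp
  rw [hAM] at hmono
  linarith
end

section
/- Let {P_t} be a Markov semigroup on a metric Polish space X satisfying: for some constants α > 0, β ≥ 0, continuous C, C̃ : ℝ≥0 × ℝ≥0 → ℝ>0 and δ : ℝ≥0 → ℝ≥0 with δ(t) → 0, the modified log-Harnack inequality P_t(log f)(y) ≤ log(P_t f)(x) + C(‖x‖,‖y‖)·dist(x,y)^α + δ(t)·C̃(‖x‖,‖y‖)·dist(x,y)^β·‖D log f‖_∞ holds for all bounded differentiable f ≥ 1. Then for every bounded differentiable f, every ε with 0 < ε‖f‖_∞ < 1/2, and all x, y: |P_t f(y) − P_t f(x)| ≤ ε‖f‖²_∞ + C(‖x‖,‖y‖)·dist(x,y)^α/ε + 2 δ(t)·C̃(‖x‖,‖y‖)·dist(x,y)^β·‖Df‖_∞.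 -/
open MeasureTheory Filter

lemma exp_quad_ub {u : ℝ} (h : |u| ≤ 1/2) : Real.exp (u - u^2) ≤ 1 + u := by
  obtain ⟨h1, h2⟩ := abs_le.mp h
  rcases le_or_gt 0 u with hu | hu
  · have key := Real.add_one_le_exp (-(u - u^2))
    have hE := Real.exp_pos (u - u^2)
    rw [Real.exp_neg] at key
    have h3 : (0:ℝ) < 1 - u + u^2 := by nlinarith
    have h4 : Real.exp (u - u^2) * (1 - u + u^2) ≤ 1 := by
      calc Real.exp (u - u^2) * (1 - u + u^2) ≤ Real.exp (u - u^2) * (Real.exp (u - u^2))⁻¹ := by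
            apply mul_le_mul_of_nonneg_left _ hE.le
            linarith
        _ = 1 := mul_inv_cancel₀ hE.ne'
    nlinarith
  · set s := -u + u^2 with hs
    have hs0 : 0 ≤ s := by nlinarith
    have key := Real.quadratic_le_exp_of_nonneg hs0
    have hE := Real.exp_pos s
    have h5 : (1 + u) * (1 + s + s^2/2) ≥ 1 := by nlinarith
    have h6 : Real.exp (u - u^2) = (Real.exp s)⁻¹ := by
      rw [← Real.exp_neg, hs]; ring_nf
    rw [h6, inv_le_iff_one_le_mul₀ hE]
    calc (1:ℝ) ≤ (1 + u) * (1 + s + s^2/2) := h5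
      _ ≤ (1 + u) * Real.exp s := by nlinarith

lemma log_quad_lb {u : ℝ} (h : |u| ≤ 1/2) : u - u^2 ≤ Real.log (1 + u) := by
  have hpos : (0:ℝ) < 1 + u := by
    obtain ⟨h1, h2⟩ := abs_le.mp h; linarith
  rw [Real.le_log_iff_exp_le hpos]
  exact exp_quad_ub h

/-- One-sided version of the difference estimate, for abstract probability
measures `μx`, `μy` and an abstract log-Harnack-type bound. -/
lemma one_sided_estimate {X : Type*} [NormedAddCommGroup X] [NormedSpace ℝ X]
    [MeasurableSpace X] [BorelSpace X]
    (μx μy : Measure X) [IsProbabilityMeasure μx] [IsProbabilityMeasure μy]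
    (K T : ℝ)
    (f : X → ℝ) (M L ε : ℝ) (hf : Differentiable ℝ f) (hfM : ∀ z, |f z| ≤ M)
    (hfL : ∀ z, ‖fderiv ℝ f z‖ ≤ L)
    (hε : 0 < ε) (hεM : ε * M < 1 / 2)
    (hMLH : ∀ (g : X → ℝ) (M' L' : ℝ), Differentiable ℝ g → (∀ z, 1 ≤ g z) →
      (∀ z, |g z| ≤ M') → (∀ z, ‖fderiv ℝ (fun w => Real.log (g w)) z‖ ≤ L') →
      ∫ z, Real.log (g z) ∂μy ≤ Real.log (∫ z, g z ∂μx) + K + T * L') :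
    (∫ z, f z ∂μy) - ∫ z, f z ∂μx ≤ ε * M ^ 2 + K / ε + T * (2 * ε * L) / ε := by
  have hM0 : 0 ≤ M := (abs_nonneg _).trans (hfM 0)
  have hcf : Continuous f := hf.continuous
  -- the auxiliary function g = 2 + 2 ε f
  set g : X → ℝ := fun z => 2 + 2 * ε * f z with hg
  have hgdiff : Differentiable ℝ g := (hf.const_mul (2 * ε)).const_add 2
  have hbound : ∀ z, |ε * f z| ≤ ε * M := fun z => by
    rw [abs_mul, abs_of_pos hε]
    exact mul_le_mul_of_nonneg_left (hfM z) hε.le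
  have hbound' : ∀ z, |ε * f z| ≤ 1/2 := fun z => (hbound z).trans hεM.le
  have hg1 : ∀ z, 1 ≤ g z := fun z => by
    have := abs_le.mp (hbound' z); simp only [hg]; nlinarith [this.1]
  have hgM : ∀ z, |g z| ≤ 2 + 2 * ε * M := fun z => by
    have h1 := abs_le.mp (hbound z)
    rw [abs_of_pos (lt_of_lt_of_le one_pos (hg1 z))]
    simp only [hg]; nlinarith [h1.2]
  have hgL : ∀ z, ‖fderiv ℝ (fun w => Real.log (g w)) z‖ ≤ 2 * ε * L := by
    intro z
    have hgz : g z ≠ 0 := (lt_of_lt_of_le one_pos (hg1 z)).ne'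
    have hd : HasFDerivAt g ((2 * ε) • fderiv ℝ f z) z :=
      ((hf z).hasFDerivAt.const_mul (2 * ε)).const_add 2
    have hd2 : HasFDerivAt (fun w => Real.log (g w)) ((g z)⁻¹ • ((2 * ε) • fderiv ℝ f z)) z :=
      hd.log hgz
    rw [hd2.fderiv, norm_smul, norm_smul]
    have h1 : ‖(g z)⁻¹‖ ≤ 1 := by
      rw [Real.norm_eq_abs, abs_inv, abs_of_pos (lt_of_lt_of_le one_pos (hg1 z))]
      exact inv_le_one_of_one_le₀ (hg1 z)
    have h2 : ‖(2 * ε : ℝ)‖ = 2 * ε := by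
      rw [Real.norm_eq_abs, abs_of_pos (by linarith)]
    calc ‖(g z)⁻¹‖ * (‖(2 * ε : ℝ)‖ * ‖fderiv ℝ f z‖)
        ≤ 1 * (‖(2 * ε : ℝ)‖ * ‖fderiv ℝ f z‖) := by
          apply mul_le_mul_of_nonneg_right h1 (by positivity)
      _ = (2 * ε) * ‖fderiv ℝ f z‖ := by rw [h2]; ring
      _ ≤ (2 * ε) * L := by
          apply mul_le_mul_of_nonneg_left (hfL z) (by linarith)
  have key := hMLH g (2 + 2 * ε * M) (2 * ε * L) hgdiff hg1 hgM hgL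
  -- integrability facts
  have hint : ∀ (ν : Measure X), IsProbabilityMeasure ν → Integrable f ν := by
    intro ν hν
    exact (integrable_const M).mono' hcf.aestronglyMeasurable
      (Filter.Eventually.of_forall fun z => by simpa [Real.norm_eq_abs] using hfM z)
  have hintsq : ∀ (ν : Measure X), IsProbabilityMeasure ν → Integrable (fun z => (f z)^2) ν := by
    intro ν hν
    refine (integrable_const (M^2)).mono' (hcf.pow 2).aestronglyMeasurable
      (Filter.Eventually.of_forall fun z => ?_)
    have := abs_le.mp (hfM z)
    rw [Real.norm_eq_abs, abs_of_nonneg (sq_nonneg _)]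
    nlinarith [this.1, this.2]
  have hintlog : Integrable (fun z => Real.log (g z)) μy := by
    refine (integrable_const (Real.log (2 + 2 * ε * M))).mono'
      (Real.measurable_log.comp (hgdiff.continuous.measurable)).aestronglyMeasurable
      (Filter.Eventually.of_forall fun z => ?_)
    have h1 : 0 ≤ Real.log (g z) := Real.log_nonneg (hg1 z)
    rw [Real.norm_eq_abs, abs_of_nonneg h1]
    apply Real.log_le_log (lt_of_lt_of_le one_pos (hg1 z))
    have := abs_le.mp (hgM z)
    linarith [this.2]
  set A := ∫ z, f z ∂μy with hA
  set B := ∫ z, f z ∂μx with hB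
  -- lower bound for ∫ log g dμy
  have step1 : Real.log 2 + ε * A - ε^2 * M^2 ≤ ∫ z, Real.log (g z) ∂μy := by
    have hpt : ∀ z, Real.log 2 + ε * f z - ε^2 * (f z)^2 ≤ Real.log (g z) := by
      intro z
      have hu := hbound' z
      have h1 : g z = 2 * (1 + ε * f z) := by simp only [hg]; ring
      have h2 : (0:ℝ) < 1 + ε * f z := by
        have := abs_le.mp hu; linarith [this.1]
      rw [h1, Real.log_mul two_ne_zero h2.ne']
      have h3 := log_quad_lb hu
      nlinarith [h3]
    have hlhs : Integrable (fun z => Real.log 2 + ε * f z - ε^2 * (f z)^2) μy := by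
      exact ((integrable_const (Real.log 2)).add ((hint μy inferInstance).const_mul ε)).sub
        ((hintsq μy inferInstance).const_mul (ε^2))
    have hmono := integral_mono hlhs hintlog hpt
    have hcalc : ∫ z, (Real.log 2 + ε * f z - ε^2 * (f z)^2) ∂μy
        = Real.log 2 + ε * A - ε^2 * ∫ z, (f z)^2 ∂μy := by
      have i1 : Integrable (fun z => Real.log 2 + ε * f z) μy :=
        (integrable_const _).add ((hint μy inferInstance).const_mul ε)
      have i2 : Integrable (fun z => ε ^ 2 * f z ^ 2) μy :=
        (hintsq μy inferInstance).const_mul _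
      have i3 : Integrable (fun z => ε * f z) μy := (hint μy inferInstance).const_mul ε
      rw [integral_sub i1 i2, integral_add (integrable_const _) i3,
        integral_const, integral_const_mul, integral_const_mul]
      simp [hA]
    have hsq : ∫ z, (f z)^2 ∂μy ≤ M^2 := by
      calc ∫ z, (f z)^2 ∂μy ≤ ∫ _z, M^2 ∂μy := by
            apply integral_mono (hintsq μy inferInstance) (integrable_const _)
            intro z
            show f z ^ 2 ≤ M ^ 2
            have := abs_le.mp (hfM z); nlinarith [this.1, this.2]
        _ = M^2 := by simp
    rw [hcalc] at hmono
    nlinarith [sq_nonneg ε]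
  -- upper bound for log ∫ g dμx
  have step2 : Real.log (∫ z, g z ∂μx) ≤ Real.log 2 + ε * B := by
    have hcalc : ∫ z, g z ∂μx = 2 * (1 + ε * B) := by
      simp only [hg]
      rw [integral_add (integrable_const _) ((hint μx inferInstance).const_mul (2*ε)),
        integral_const, integral_const_mul]
      simp [hB]; ring
    have hBM : |B| ≤ M := by
      calc |B| ≤ ∫ z, |f z| ∂μx := by
            simpa [Real.norm_eq_abs] using norm_integral_le_integral_norm (μ := μx) f
        _ ≤ ∫ _z, M ∂μx := integral_mono ((hint μx inferInstance).abs) (integrable_const _) hfM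
        _ = M := by simp
    have hεB : |ε * B| ≤ 1/2 := by
      rw [abs_mul, abs_of_pos hε]
      calc ε * |B| ≤ ε * M := mul_le_mul_of_nonneg_left hBM hε.le
        _ ≤ 1/2 := hεM.le
    have h2 : (0:ℝ) < 1 + ε * B := by
      have := abs_le.mp hεB; linarith [this.1]
    rw [hcalc, Real.log_mul two_ne_zero h2.ne']
    have h3 := Real.log_le_sub_one_of_pos h2
    linarith
  -- combine
  have hcomb : ε * A - ε^2 * M^2 ≤ ε * B + K + T * (2 * ε * L) := by linarith
  rw [← mul_le_mul_iff_right₀ hε]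
  have e1 : ε * (A - B) = ε * A - ε * B := by ring
  have e2 : ε * (ε * M ^ 2 + K / ε + T * (2 * ε * L) / ε)
      = ε^2 * M^2 + ε * (K / ε) + ε * (T * (2 * ε * L) / ε) := by ring
  have e3 : ε * (K / ε) = K := by field_simp
  have e4 : ε * (T * (2 * ε * L) / ε) = T * (2 * ε * L) := by field_simp
  rw [e1, e2, e3, e4]
  linarith

/-- If a Markov semigroup satisfies the modified log-Harnack inequality, then the
pointwise difference estimate (2.5) of the paper holds. -/
theorem modified_logHarnack_implies_difference_estimate
    {X : Type*} [NormedAddCommGroup X] [NormedSpace ℝ X]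
    [MeasurableSpace X] [BorelSpace X]
    (P : ℝ → X → Measure X) (hP : ∀ t x, IsProbabilityMeasure (P t x))
    (α β : ℝ) (hα : 0 < α) (hβ : 0 ≤ β)
    (C Ct : ℝ → ℝ → ℝ)
    (hCpos : ∀ r s, 0 < C r s) (hCtpos : ∀ r s, 0 < Ct r s)
    (hCcont : Continuous fun p : ℝ × ℝ => C p.1 p.2)
    (hCtcont : Continuous fun p : ℝ × ℝ => Ct p.1 p.2)
    (δ : ℝ → ℝ) (hδ : ∀ t, 0 ≤ δ t) (hδ0 : Tendsto δ atTop (nhds 0))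
    -- modified log-Harnack inequality for bounded differentiable f ≥ 1
    (hMLH : ∀ (f : X → ℝ) (M L : ℝ), Differentiable ℝ f → (∀ z, 1 ≤ f z) →
      (∀ z, |f z| ≤ M) →
      (∀ z, ‖fderiv ℝ (fun w => Real.log (f w)) z‖ ≤ L) →
      ∀ (t : ℝ) (x y : X),
        ∫ z, Real.log (f z) ∂(P t y) ≤ Real.log (∫ z, f z ∂(P t x))
          + C ‖x‖ ‖y‖ * dist x y ^ α + δ t * Ct ‖x‖ ‖y‖ * dist x y ^ β * L) :
    -- conclusion: estimate (2.5)
    ∀ (f : X → ℝ) (M L : ℝ), Differentiable ℝ f → (∀ z, |f z| ≤ M) →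
      (∀ z, ‖fderiv ℝ f z‖ ≤ L) →
      ∀ ε : ℝ, 0 < ε → ε * M < 1 / 2 →
      ∀ (t : ℝ) (x y : X),
        |(∫ z, f z ∂(P t y)) - ∫ z, f z ∂(P t x)| ≤
          ε * M ^ 2 + C ‖x‖ ‖y‖ * dist x y ^ α / ε
            + 2 * δ t * Ct ‖x‖ ‖y‖ * dist x y ^ β * L := by
  intro f M L hf hfM hfL ε hε hεM t x y
  haveI := hP t x
  haveI := hP t y
  set K := C ‖x‖ ‖y‖ * dist x y ^ α with hK
  set T := δ t * Ct ‖x‖ ‖y‖ * dist x y ^ β with hT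
  have hMLH' : ∀ (g : X → ℝ) (M' L' : ℝ), Differentiable ℝ g → (∀ z, 1 ≤ g z) →
      (∀ z, |g z| ≤ M') → (∀ z, ‖fderiv ℝ (fun w => Real.log (g w)) z‖ ≤ L') →
      ∫ z, Real.log (g z) ∂(P t y) ≤ Real.log (∫ z, g z ∂(P t x)) + K + T * L' := by
    intro g M' L' h1 h2 h3 h4
    simpa [hK, hT] using hMLH g M' L' h1 h2 h3 h4 t x y
  have hside1 := one_sided_estimate (P t x) (P t y) K T f M L ε hf hfM hfL hε hεM hMLH'
  have hside2 := one_sided_estimate (P t x) (P t y) K T (fun z => -f z) M L ε hf.neg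
    (fun z => by simpa using hfM z)
    (fun z => by
      calc ‖fderiv ℝ (fun w => -f w) z‖ = ‖-fderiv ℝ f z‖ := by rw [fderiv_fun_neg]
        _ = ‖fderiv ℝ f z‖ := norm_neg _
        _ ≤ L := hfL z)
    hε hεM hMLH'
  rw [integral_neg, integral_neg] at hside2
  have hTL : T * (2 * ε * L) / ε = 2 * T * L := by field_simp
  rw [hTL] at hside1 hside2
  have hgoal : 2 * δ t * Ct ‖x‖ ‖y‖ * dist x y ^ β * L = 2 * T * L := by
    rw [hT]; ring
  rw [hgoal]
  rw [abs_le]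
  constructor <;> linarith
end

section
/- Under the hypotheses of the previous estimate with α = 2 and β = 1, the gradient bound |D P_t f(x)| ≤ ‖f‖²_∞ + C(‖x‖,‖x‖) + δ(t)·C̃(‖x‖,‖x‖)·‖Df‖_∞ holds for every bounded differentiable function f and every x. -/
open MeasureTheory Filter
open Topology

private lemma exp_le_one_add_add_sq {u : ℝ} (hu : |u| ≤ 1) :
    Real.exp u ≤ 1 + u + u ^ 2 := by
  have h := Real.exp_bound hu (n := 2) (by norm_num)
  have h2 : |Real.exp u - (1 + u)| ≤ |u| ^ 2 * (3 / 4) := by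
    convert h using 2
    · simp [Finset.sum_range_succ]
    · norm_num
  have h3 := (abs_sub_le_iff.1 h2).1
  have h4 : |u| ^ 2 = u ^ 2 := sq_abs u
  nlinarith [sq_nonneg u]

set_option maxHeartbeats 1000000 in
/-- Corollary 1.3: the modified log-Harnack inequality with `α = 2`, `β = 1`
implies the Hairer–Mattingly-type gradient bound
`|D P_t f(x)| ≤ ‖f‖²_∞ + C + δ(t) C̃ ‖Df‖_∞`. -/
theorem modified_logHarnack_implies_gradient_bound
    {X : Type*} [NormedAddCommGroup X] [NormedSpace ℝ X]
    [MeasurableSpace X] [BorelSpace X]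
    (P : ℝ → X → Measure X) (hP : ∀ t x, IsProbabilityMeasure (P t x))
    (C Ct : ℝ → ℝ → ℝ)
    (hCpos : ∀ r s, 0 < C r s) (hCtpos : ∀ r s, 0 < Ct r s)
    (hCcont : Continuous fun p : ℝ × ℝ => C p.1 p.2)
    (hCtcont : Continuous fun p : ℝ × ℝ => Ct p.1 p.2)
    (δ : ℝ → ℝ) (hδ : ∀ t, 0 ≤ δ t) (hδ0 : Tendsto δ atTop (nhds 0))
    -- modified log-Harnack inequality with α = 2, β = 1
    (hMLH : ∀ (f : X → ℝ) (M L : ℝ), Differentiable ℝ f → (∀ z, 1 ≤ f z) →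
      (∀ z, |f z| ≤ M) →
      (∀ z, ‖fderiv ℝ (fun w => Real.log (f w)) z‖ ≤ L) →
      ∀ (t : ℝ) (x y : X),
        ∫ z, Real.log (f z) ∂(P t y) ≤ Real.log (∫ z, f z ∂(P t x))
          + C ‖x‖ ‖y‖ * dist x y ^ 2 + δ t * Ct ‖x‖ ‖y‖ * dist x y * L) :
    ∀ (f : X → ℝ) (M L : ℝ), Differentiable ℝ f → (∀ z, |f z| ≤ M) →
      (∀ z, ‖fderiv ℝ f z‖ ≤ L) →
      ∀ (t : ℝ) (x : X),
        ‖fderiv ℝ (fun y => ∫ z, f z ∂(P t y)) x‖ ≤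
          M ^ 2 + C ‖x‖ ‖x‖ + δ t * Ct ‖x‖ ‖x‖ * L := by
  intro f M L hfd hfM hfL t x
  have hM0 : 0 ≤ M := le_trans (abs_nonneg _) (hfM x)
  have hL0 : 0 ≤ L := le_trans (norm_nonneg _) (hfL x)
  set F : X → ℝ := fun y => ∫ z, f z ∂(P t y) with hF
  set B : ℝ := M ^ 2 + C ‖x‖ ‖x‖ + δ t * Ct ‖x‖ ‖x‖ * L with hB
  have hB0 : 0 ≤ B := by
    have h1 := hCpos ‖x‖ ‖x‖
    have h2 := mul_nonneg (mul_nonneg (hδ t) (hCtpos ‖x‖ ‖x‖).le) hL0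
    nlinarith [sq_nonneg M]
  -- integrability of f w.r.t. any P t c
  have hfi : ∀ c : X, Integrable f (P t c) := by
    intro c
    haveI := hP t c
    exact (integrable_const M).mono' hfd.continuous.aestronglyMeasurable
      (Eventually.of_forall fun z => by simpa [Real.norm_eq_abs] using hfM z)
  -- bounds on the mean
  have hFlb : ∀ c : X, -M ≤ F c := by
    intro c
    haveI := hP t c
    calc -M = ∫ _z, (-M : ℝ) ∂(P t c) := by simp
    _ ≤ ∫ z, f z ∂(P t c) :=
      integral_mono (integrable_const _) (hfi c) fun z => neg_le_of_abs_le (hfM z)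
  -- Key Lipschitz-type estimate coming from the modified log-Harnack inequality.
  have key : ∀ a b : X, 0 < dist a b → dist a b * M ≤ 1 / 2 →
      F b ≤ F a + dist a b * (M ^ 2 + C ‖a‖ ‖b‖ + δ t * Ct ‖a‖ ‖b‖ * L) := by
    intro a b hr hrM
    set r : ℝ := dist a b with hrdef
    set g : X → ℝ := fun z => Real.exp (r * (f z + M)) with hg
    have hfz : ∀ z, -M ≤ f z := fun z => neg_le_of_abs_le (hfM z)
    have hg1 : ∀ z, 1 ≤ g z := fun z =>
      Real.one_le_exp (mul_nonneg hr.le (by linarith [hfz z]))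
    have hgMb : ∀ z, |g z| ≤ Real.exp (r * (2 * M)) := by
      intro z
      rw [abs_of_pos (Real.exp_pos _)]
      exact Real.exp_le_exp.2 (by nlinarith [(hfM z).trans_lt (lt_add_one M), abs_le.1 (hfM z)])
    have hgd : Differentiable ℝ g := ((hfd.add_const M).const_mul r).exp
    have hlog : (fun w => Real.log (g w)) = fun w => r * f w + r * M := by
      funext w
      rw [hg]
      simp only [Real.log_exp]
      ring
    have hlogL : ∀ z, ‖fderiv ℝ (fun w => Real.log (g w)) z‖ ≤ r * L := by
      intro z
      rw [hlog]
      have : fderiv ℝ (fun w => r * f w + r * M) z = r • fderiv ℝ f z := by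
        rw [fderiv_add_const, fderiv_const_mul (hfd z)]
      rw [this, norm_smul, Real.norm_eq_abs, abs_of_pos hr]
      exact mul_le_mul_of_nonneg_left (hfL z) hr.le
    have H := hMLH g (Real.exp (r * (2 * M))) (r * L) hgd hg1 hgMb hlogL t a b
    -- left-hand side
    haveI := hP t b
    haveI := hP t a
    have hLHS : ∫ z, Real.log (g z) ∂(P t b) = r * F b + r * M := by
      rw [hlog, integral_add ((hfi b).const_mul r) (integrable_const _),
        integral_const_mul, integral_const]
      simp [hF]
    -- right-hand side: bound the log of the integral
    have hgi : Integrable g (P t a) :=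
      (integrable_const (Real.exp (r * (2 * M)))).mono' hgd.continuous.aestronglyMeasurable
        (Eventually.of_forall fun z => by
          simpa [Real.norm_eq_abs, abs_of_pos (Real.exp_pos _)] using hgMb z)
    have hIg1 : (1 : ℝ) ≤ ∫ z, g z ∂(P t a) := by
      calc (1 : ℝ) = ∫ _z, (1 : ℝ) ∂(P t a) := by simp
      _ ≤ ∫ z, g z ∂(P t a) := integral_mono (integrable_const _) hgi hg1
    have hpt : ∀ z, g z ≤ Real.exp (r * M) * (1 + r * f z + r ^ 2 * M ^ 2) := by
      intro z
      have hu : |r * f z| ≤ 1 := by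
        rw [abs_mul, abs_of_pos hr]
        calc r * |f z| ≤ r * M := mul_le_mul_of_nonneg_left (hfM z) hr.le
        _ ≤ 1 / 2 := hrM
        _ ≤ 1 := by norm_num
      have he := exp_le_one_add_add_sq hu
      have hsq : (r * f z) ^ 2 ≤ r ^ 2 * M ^ 2 := by
        rw [mul_pow]
        have : f z ^ 2 ≤ M ^ 2 := sq_le_sq' (hfz z) (le_of_abs_le (hfM z))
        nlinarith [sq_nonneg r]
      calc g z = Real.exp (r * M) * Real.exp (r * f z) := by
            show Real.exp (r * (f z + M)) = _
            rw [← Real.exp_add, mul_add, add_comm (r * f z) (r * M)]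
      _ ≤ Real.exp (r * M) * (1 + r * f z + (r * f z) ^ 2) :=
          mul_le_mul_of_nonneg_left he (Real.exp_pos _).le
      _ ≤ Real.exp (r * M) * (1 + r * f z + r ^ 2 * M ^ 2) := by
          have := (Real.exp_pos (r * M)).le
          nlinarith
    have hint1 : Integrable (fun z => 1 + r * f z) (P t a) :=
      (integrable_const (1 : ℝ)).add ((hfi a).const_mul r)
    have hint2 : Integrable (fun z => 1 + r * f z + r ^ 2 * M ^ 2) (P t a) :=
      hint1.add (integrable_const _)
    have hrhsInt : Integrable (fun z => Real.exp (r * M) * (1 + r * f z + r ^ 2 * M ^ 2))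
        (P t a) := hint2.const_mul _
    have hIg : ∫ z, g z ∂(P t a) ≤ Real.exp (r * M) * (1 + r * F a + r ^ 2 * M ^ 2) := by
      calc ∫ z, g z ∂(P t a)
          ≤ ∫ z, Real.exp (r * M) * (1 + r * f z + r ^ 2 * M ^ 2) ∂(P t a) :=
            integral_mono hgi hrhsInt hpt
      _ = Real.exp (r * M) * (1 + r * F a + r ^ 2 * M ^ 2) := by
            rw [integral_const_mul,
              integral_add hint1 (integrable_const _),
              integral_add (integrable_const (1 : ℝ)) ((hfi a).const_mul r),
              integral_const_mul, integral_const, integral_const]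
            simp [hF]
    have hvlb : -(1 / 2 : ℝ) ≤ r * F a := by
      have h1 : r * (-M) ≤ r * F a := mul_le_mul_of_nonneg_left (hFlb a) hr.le
      nlinarith
    have hpos : (0 : ℝ) < 1 + r * F a + r ^ 2 * M ^ 2 := by nlinarith [sq_nonneg (r * M)]
    have hlogIg : Real.log (∫ z, g z ∂(P t a)) ≤ r * M + r * F a + r ^ 2 * M ^ 2 := by
      calc Real.log (∫ z, g z ∂(P t a))
          ≤ Real.log (Real.exp (r * M) * (1 + r * F a + r ^ 2 * M ^ 2)) :=
            Real.log_le_log (lt_of_lt_of_le one_pos hIg1) hIg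
      _ = r * M + Real.log (1 + r * F a + r ^ 2 * M ^ 2) := by
            rw [Real.log_mul (Real.exp_ne_zero _) (ne_of_gt hpos), Real.log_exp]
      _ ≤ r * M + (r * F a + r ^ 2 * M ^ 2) := by
            have := Real.log_le_sub_one_of_pos hpos
            linarith
      _ = r * M + r * F a + r ^ 2 * M ^ 2 := by ring
    rw [hLHS] at H
    have hr2 : dist a b ^ 2 = r * r := by rw [← hrdef]; ring
    have h2 : r * F b ≤ r * (F a + r * (M ^ 2 + C ‖a‖ ‖b‖ + δ t * Ct ‖a‖ ‖b‖ * L)) := by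
      have hH2 : r * F b + r * M ≤ (r * M + r * F a + r ^ 2 * M ^ 2)
          + C ‖a‖ ‖b‖ * (r * r) + δ t * Ct ‖a‖ ‖b‖ * r * (r * L) := by
        rw [← hr2]
        calc r * F b + r * M ≤ Real.log (∫ z, g z ∂(P t a))
            + C ‖a‖ ‖b‖ * dist a b ^ 2 + δ t * Ct ‖a‖ ‖b‖ * dist a b * (r * L) := H
        _ ≤ (r * M + r * F a + r ^ 2 * M ^ 2)
            + C ‖a‖ ‖b‖ * dist a b ^ 2 + δ t * Ct ‖a‖ ‖b‖ * dist a b * (r * L) := by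
              linarith
      nlinarith [hH2]
    exact le_of_mul_le_mul_left (by linarith [h2]) hr
  -- Now the derivative bound.
  by_cases hdiff : DifferentiableAt ℝ F x
  · have hD := hdiff.hasFDerivAt
    refine ContinuousLinearMap.opNorm_le_bound _ hB0 fun v => ?_
    rcases eq_or_ne v 0 with rfl | hv
    · simp
    have hv0 : 0 < ‖v‖ := norm_pos_iff.mpr hv
    have hline : HasDerivAt (fun h : ℝ => F (x + h • v)) (fderiv ℝ F x v) 0 := by
      have h1 : HasDerivAt (fun h : ℝ => x + h • v) v 0 := by
        simpa using ((hasDerivAt_id (0 : ℝ)).smul_const v).const_add x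
      have h2 : HasFDerivAt F (fderiv ℝ F x) (x + (0 : ℝ) • v) := by
        simpa using hD
      exact h2.comp_hasDerivAt 0 h1
    have hslope : Tendsto (fun h : ℝ => (F (x + h • v) - F x) / h) (𝓝[>] (0 : ℝ))
        (𝓝 (fderiv ℝ F x v)) := by
      have h3 := hasDerivAt_iff_tendsto_slope.mp hline
      have h4 : Tendsto (slope (fun h : ℝ => F (x + h • v)) 0) (𝓝[>] (0 : ℝ))
          (𝓝 (fderiv ℝ F x v)) :=
        h3.mono_left (nhdsWithin_mono _ fun h hh => ne_of_gt hh)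
      refine h4.congr fun h => ?_
      simp [slope_def_field, div_eq_inv_mul]
    -- eventual bounds for small positive h
    set c : ℝ := (1 / 2) / (‖v‖ * (M + 1)) with hc
    have hcpos : 0 < c :=
      div_pos (by norm_num) (mul_pos hv0 (by linarith))
    have hmem : Set.Ioo (0 : ℝ) c ∈ 𝓝[>] (0 : ℝ) := Ioo_mem_nhdsGT hcpos
    have hdistl : ∀ h : ℝ, h ∈ Set.Ioo (0 : ℝ) c →
        (0 < dist x (x + h • v) ∧ dist x (x + h • v) = h * ‖v‖ ∧
          dist x (x + h • v) * M ≤ 1 / 2) := by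
      intro h hh
      have hd : dist x (x + h • v) = h * ‖v‖ := by
        rw [dist_eq_norm]
        simp [norm_smul, abs_of_pos hh.1]
      refine ⟨by rw [hd]; exact mul_pos hh.1 hv0, hd, ?_⟩
      rw [hd]
      have h1 : h * ‖v‖ * M ≤ c * ‖v‖ * M :=
        mul_le_mul_of_nonneg_right (mul_le_mul_of_nonneg_right hh.2.le hv0.le) hM0
      have h2 : c * (‖v‖ * (M + 1)) = 1 / 2 :=
        div_mul_cancel₀ _ (by positivity)
      nlinarith [mul_pos hcpos hv0]
    -- upper bound
    have hub : fderiv ℝ F x v ≤ B * ‖v‖ := by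
      have htend : Tendsto
          (fun h : ℝ => (M ^ 2 + C ‖x‖ ‖x + h • v‖ + δ t * Ct ‖x‖ ‖x + h • v‖ * L) * ‖v‖)
          (𝓝[>] (0 : ℝ)) (𝓝 (B * ‖v‖)) := by
        have hcont : Continuous fun h : ℝ =>
            (M ^ 2 + C ‖x‖ ‖x + h • v‖ + δ t * Ct ‖x‖ ‖x + h • v‖ * L) * ‖v‖ := by
          have hn : Continuous fun h : ℝ => ‖x + h • v‖ :=
            (continuous_const.add (continuous_id.smul continuous_const)).norm
          exact (((continuous_const.add
            (hCcont.comp (continuous_const.prodMk hn))).add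
            ((continuous_const.mul (hCtcont.comp (continuous_const.prodMk hn))).mul
              continuous_const)).mul continuous_const)
        have := hcont.tendsto 0
        simp only [zero_smul, add_zero] at this
        exact this.mono_left nhdsWithin_le_nhds
      refine le_of_tendsto_of_tendsto hslope htend ?_
      filter_upwards [hmem] with h hh
      obtain ⟨hd0, hd, hdM⟩ := hdistl h hh
      have hk := key x (x + h • v) hd0 hdM
      rw [div_le_iff₀ hh.1]
      have : F (x + h • v) - F x ≤
          dist x (x + h • v) * (M ^ 2 + C ‖x‖ ‖x + h • v‖ + δ t * Ct ‖x‖ ‖x + h • v‖ * L) := by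
        linarith
      calc F (x + h • v) - F x
          ≤ h * ‖v‖ * (M ^ 2 + C ‖x‖ ‖x + h • v‖ + δ t * Ct ‖x‖ ‖x + h • v‖ * L) := by
            rw [← hd]; exact this
      _ = (M ^ 2 + C ‖x‖ ‖x + h • v‖ + δ t * Ct ‖x‖ ‖x + h • v‖ * L) * ‖v‖ * h := by ring
    -- lower bound
    have hlb : -(B * ‖v‖) ≤ fderiv ℝ F x v := by
      have htend : Tendsto
          (fun h : ℝ => -((M ^ 2 + C ‖x + h • v‖ ‖x‖ + δ t * Ct ‖x + h • v‖ ‖x‖ * L) * ‖v‖))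
          (𝓝[>] (0 : ℝ)) (𝓝 (-(B * ‖v‖))) := by
        have hn : Continuous fun h : ℝ => ‖x + h • v‖ :=
          (continuous_const.add (continuous_id.smul continuous_const)).norm
        have hcont : Continuous fun h : ℝ =>
            -((M ^ 2 + C ‖x + h • v‖ ‖x‖ + δ t * Ct ‖x + h • v‖ ‖x‖ * L) * ‖v‖) :=
          (((continuous_const.add
            (hCcont.comp (hn.prodMk continuous_const))).add
            ((continuous_const.mul (hCtcont.comp (hn.prodMk continuous_const))).mul
              continuous_const)).mul continuous_const).neg
        have := hcont.tendsto 0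
        simp only [zero_smul, add_zero] at this
        exact this.mono_left nhdsWithin_le_nhds
      refine le_of_tendsto_of_tendsto htend hslope ?_
      filter_upwards [hmem] with h hh
      obtain ⟨hd0, hd, hdM⟩ := hdistl h hh
      have hd0' : 0 < dist (x + h • v) x := by rwa [dist_comm]
      have hdM' : dist (x + h • v) x * M ≤ 1 / 2 := by rwa [dist_comm]
      have hk := key (x + h • v) x hd0' hdM'
      rw [le_div_iff₀ hh.1]
      have hdd : dist (x + h • v) x = h * ‖v‖ := by rw [dist_comm]; exact hd
      calc -((M ^ 2 + C ‖x + h • v‖ ‖x‖ + δ t * Ct ‖x + h • v‖ ‖x‖ * L) * ‖v‖) * h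
          = -(h * ‖v‖ * (M ^ 2 + C ‖x + h • v‖ ‖x‖ + δ t * Ct ‖x + h • v‖ ‖x‖ * L)) := by ring
      _ ≤ F (x + h • v) - F x := by
          rw [← hdd]
          linarith
    rw [Real.norm_eq_abs]
    exact abs_le.mpr ⟨by linarith, hub⟩
  · rw [hF] at hdiff ⊢
    rw [fderiv_zero_of_not_differentiableAt hdiff]
    simpa using hB0
end

section
/- Let μ₁, μ₂ be probability measures on a Polish space X, and let {d_n} be a nondecreasing sequence of bounded continuous pseudo-metrics with d_n ≤ 1 and d_n(x,y) → 1 for all x ≠ y. Then the Wasserstein-type distances ‖μ₁ − μ₂‖_{d_n} := inf_{π ∈ C(μ₁,μ₂)} ∫ d_n(x,y) dπ converge to the total variation distance ‖μ₁ − μ₂‖_{TV} as n → ∞. -/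
open MeasureTheory Filter Set
open scoped ENNReal NNReal

set_option linter.unusedSectionVars false
set_option linter.unusedVariables false

section T
variable {X : Type*} [MetricSpace X] [MeasurableSpace X] [BorelSpace X]


lemma exists_compact_large [TopologicalSpace.SeparableSpace X] [CompleteSpace X]
    (μ : Measure X) [IsFiniteMeasure μ] {δ : ℝ≥0∞} (hδ : δ ≠ 0) :
    ∃ K : Set X, IsCompact K ∧ μ Set.univ ≤ μ K + δ := by
  rcases isEmpty_or_nonempty X with hX | hX
  · refine ⟨∅, isCompact_empty, ?_⟩
    have : (Set.univ : Set X) = ∅ := Set.eq_empty_of_isEmpty _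
    simp [this]
  obtain ⟨u, hu⟩ := TopologicalSpace.exists_dense_seq X
  obtain ⟨ε', hε'pos, hε'sum⟩ := ENNReal.exists_pos_sum_of_countable' hδ ℕ
  have key : ∀ m : ℕ, ∃ k : ℕ,
      μ Set.univ ≤ μ (⋃ i ∈ Finset.range k, Metric.closedBall (u i) (1/(m+1))) + ε' m := by
    intro m
    set s : ℕ → Set X := fun k => ⋃ i ∈ Finset.range k, Metric.closedBall (u i) (1/(m+1)) with hs
    have hmono : Monotone s := by
      intro a b hab
      exact Set.biUnion_subset_biUnion_left
        (Finset.coe_subset.2 (Finset.range_subset_range.2 hab))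
    have hcover : (⋃ k, s k) = Set.univ := by
      apply Set.eq_univ_of_forall
      intro x
      have : (1:ℝ)/(m+1) > 0 := by positivity
      obtain ⟨i, hi⟩ : ∃ i, u i ∈ Metric.ball x (1/(m+1)) := by
        have := hu.exists_mem_open Metric.isOpen_ball ⟨x, Metric.mem_ball_self this⟩
        obtain ⟨i, hi⟩ := this
        exact ⟨i, hi⟩
      refine Set.mem_iUnion.2 ⟨i+1, ?_⟩
      apply Set.mem_biUnion (by simp : i ∈ Finset.range (i+1))
      rw [Metric.mem_closedBall]
      rw [Metric.mem_ball, dist_comm] at hi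
      exact hi.le
    have htend := tendsto_measure_iUnion_atTop (μ := μ) hmono
    rw [hcover] at htend
    -- extract k
    rcases le_or_gt (μ Set.univ) (ε' m) with h | h
    · exact ⟨0, le_add_of_nonneg_of_le (zero_le) h⟩
    · have hlt : μ Set.univ - ε' m < μ Set.univ :=
        ENNReal.sub_lt_self (measure_ne_top μ _) ((hε'pos m).trans h).ne' (hε'pos m).ne'
      obtain ⟨k, hk⟩ := (htend.eventually (eventually_gt_nhds hlt)).exists
      refine ⟨k, ?_⟩
      have := hk.le
      rwa [tsub_le_iff_right] at this
  choose k hk using key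
  set S : ℕ → Set X := fun m => ⋃ i ∈ Finset.range (k m), Metric.closedBall (u i) (1/(m+1))
    with hS
  have hSclosed : ∀ m, IsClosed (S m) := by
    intro m
    apply Set.Finite.isClosed_biUnion (Finset.finite_toSet _)
    intro i _
    exact Metric.isClosed_closedBall
  refine ⟨⋂ m, S m, ?_, ?_⟩
  · refine TotallyBounded.isCompact_of_isClosed ?_ (isClosed_iInter hSclosed)
    rw [Metric.totallyBounded_iff]
    intro ε hε
    obtain ⟨m, hm⟩ := exists_nat_one_div_lt hε
    refine ⟨u '' {i | i < k m}, (Set.finite_Iio (k m)).image u, ?_⟩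
    intro x hx
    have hx' : x ∈ S m := Set.mem_iInter.1 hx m
    simp only [hS, Set.mem_iUnion, Finset.mem_range] at hx'
    obtain ⟨i, hi, hxi⟩ := hx'
    rw [Metric.mem_closedBall] at hxi
    refine Set.mem_biUnion ⟨i, hi, rfl⟩ ?_
    rw [Metric.mem_ball]
    exact hxi.trans_lt hm
  · have hcompl : μ (⋂ m, S m)ᶜ ≤ δ := by
      rw [Set.compl_iInter]
      refine (measure_iUnion_le _).trans ?_
      refine le_trans (ENNReal.tsum_le_tsum fun m => ?_) hε'sum.le
      have : μ (S m)ᶜ = μ Set.univ - μ (S m) :=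
        measure_compl (hSclosed m).measurableSet (measure_ne_top μ _)
      rw [this, tsub_le_iff_right]
      exact (hk m).trans (by rw [add_comm])
    calc μ Set.univ = μ (⋂ m, S m) + μ (⋂ m, S m)ᶜ :=
          (measure_add_measure_compl (isClosed_iInter hSclosed).measurableSet).symm
      _ ≤ μ (⋂ m, S m) + δ := by gcongr

lemma exists_compact_subset_measure [TopologicalSpace.SeparableSpace X] [CompleteSpace X]
    (μ : Measure X) [IsFiniteMeasure μ] {A : Set X} (hA : MeasurableSet A)
    {δ : ℝ≥0∞} (hδ : δ ≠ 0) :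
    ∃ K, K ⊆ A ∧ IsCompact K ∧ μ A ≤ μ K + δ := by
  have hδ2 : (δ/2) ≠ 0 := by simp [ENNReal.div_eq_zero_iff, hδ]
  obtain ⟨F, hFA, hFc, hF⟩ := hA.exists_isClosed_lt_add (measure_ne_top μ A) hδ2
  obtain ⟨K₀, hK₀c, hK₀⟩ := exists_compact_large μ hδ2
  refine ⟨F ∩ K₀, Set.inter_subset_left.trans hFA, hK₀c.inter_left hFc, ?_⟩
  have hK₀m : MeasurableSet K₀ := hK₀c.isClosed.measurableSet
  have h1 : μ (F ∩ K₀) + μ (F \ K₀) = μ F := measure_inter_add_diff F hK₀m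
  have h2 : μ (F \ K₀) ≤ δ/2 := by
    refine le_trans (measure_mono (Set.diff_subset_diff_left (Set.subset_univ F))) ?_
    have : μ (Set.univ \ K₀) = μ Set.univ - μ K₀ := by
      rw [← Set.compl_eq_univ_diff]
      exact measure_compl hK₀m (measure_ne_top μ _)
    rw [this, tsub_le_iff_right]
    exact hK₀.trans (by rw [add_comm])
  calc μ A ≤ μ F + δ/2 := hF.le
    _ = μ (F ∩ K₀) + μ (F \ K₀) + δ/2 := by rw [h1]
    _ ≤ μ (F ∩ K₀) + δ/2 + δ/2 := by gcongr
    _ = μ (F ∩ K₀) + δ := by rw [add_assoc, ENNReal.add_halves]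
end T

section G
variable {X : Type*} [MetricSpace X]

noncomputable def gfun (e : X → X → ℝ) (K' : Set X) (x : X) : ℝ :=
  sInf (insert 1 ((fun y => e x y) '' K'))

variable {e : X → X → ℝ} {K' : Set X}

lemma gfun_bddBelow (he : ∀ x y, 0 ≤ e x y) (x : X) :
    BddBelow (insert 1 ((fun y => e x y) '' K')) := by
  refine ⟨0, ?_⟩
  rintro b (rfl | ⟨y, hy, rfl⟩)
  · norm_num
  · exact he x y

lemma gfun_nonneg (he : ∀ x y, 0 ≤ e x y) (x : X) : 0 ≤ gfun e K' x := by
  refine le_csInf (Set.insert_nonempty _ _) ?_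
  rintro b (rfl | ⟨y, hy, rfl⟩)
  · norm_num
  · exact he x y

lemma gfun_le_one (he : ∀ x y, 0 ≤ e x y) (x : X) : gfun e K' x ≤ 1 :=
  csInf_le (gfun_bddBelow he x) (Set.mem_insert _ _)

lemma gfun_zero_of_mem (he : ∀ x y, 0 ≤ e x y) (hrefl : ∀ x, e x x = 0) {x : X}
    (hx : x ∈ K') : gfun e K' x = 0 := by
  refine le_antisymm ?_ (gfun_nonneg he x)
  have : e x x ∈ insert 1 ((fun y => e x y) '' K') :=
    Set.mem_insert_of_mem _ ⟨x, hx, rfl⟩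
  have h := csInf_le (gfun_bddBelow he x) this
  rwa [hrefl x] at h

lemma gfun_ge (he : ∀ x y, 0 ≤ e x y) {ε : ℝ} (hε : 0 ≤ ε) {x : X}
    (h : ∀ y ∈ K', 1 - ε ≤ e x y) : 1 - ε ≤ gfun e K' x := by
  refine le_csInf (Set.insert_nonempty _ _) ?_
  rintro b (rfl | ⟨y, hy, rfl⟩)
  · linarith
  · exact h y hy

lemma gfun_lip (he : ∀ x y, 0 ≤ e x y) (htri : ∀ x y z, e x z ≤ e x y + e y z)
    (x x' : X) : gfun e K' x ≤ gfun e K' x' + e x x' := by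
  rw [← sub_le_iff_le_add]
  refine le_csInf (Set.insert_nonempty _ _) ?_
  rintro b (rfl | ⟨y, hy, rfl⟩)
  · have h1 : gfun e K' x ≤ 1 := gfun_le_one he x
    have := he x x'
    linarith
  · have h1 : gfun e K' x ≤ e x y :=
      csInf_le (gfun_bddBelow he x) (Set.mem_insert_of_mem _ ⟨y, hy, rfl⟩)
    have h2 := htri x x' y
    linarith

lemma gfun_continuous (hcont : Continuous fun p : X × X => e p.1 p.2)
    (he : ∀ x y, 0 ≤ e x y) (hrefl : ∀ x, e x x = 0)
    (hsymm : ∀ x y, e x y = e y x) (htri : ∀ x y z, e x z ≤ e x y + e y z) :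
    Continuous (gfun e K') := by
  rw [continuous_iff_continuousAt]
  intro x₀
  have habs : ∀ x, |gfun e K' x - gfun e K' x₀| ≤ e x x₀ := by
    intro x
    rw [abs_sub_le_iff]
    constructor
    · have := gfun_lip (K' := K') he htri x x₀; linarith
    · have := gfun_lip (K' := K') he htri x₀ x
      rw [hsymm x₀ x] at this; linarith
  have htend : Tendsto (fun x => e x x₀) (nhds x₀) (nhds 0) := by
    have := (hcont.comp (continuous_id.prodMk (continuous_const (y := x₀)))).tendsto x₀
    simpa [Function.comp_def, hrefl x₀] using this
  have : Tendsto (fun x => |gfun e K' x - gfun e K' x₀|) (nhds x₀) (nhds 0) :=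
    squeeze_zero (fun x => abs_nonneg _) habs htend
  unfold ContinuousAt
  rw [tendsto_iff_dist_tendsto_zero]
  simpa [Real.dist_eq] using this

end G

section Coupling
variable {X : Type*} [MetricSpace X] [SecondCountableTopology X] [MeasurableSpace X] [BorelSpace X]
  (μ₁ μ₂ : Measure X) [IsProbabilityMeasure μ₁] [IsProbabilityMeasure μ₂]

lemma coupling_lower {A : Set X} (hA : MeasurableSet A) (π : Measure (X × X))
    (h1 : π.map Prod.fst = μ₁) (h2 : π.map Prod.snd = μ₂) :
    μ₁ A - μ₂ A ≤ π {p : X × X | p.1 ≠ p.2} := by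
  have hm1 : μ₁ A = π (Prod.fst ⁻¹' A) := by
    rw [← h1, Measure.map_apply measurable_fst hA]
  have hm2 : μ₂ A = π (Prod.snd ⁻¹' A) := by
    rw [← h2, Measure.map_apply measurable_snd hA]
  have hsub : Prod.fst ⁻¹' A ⊆ (Prod.snd ⁻¹' A) ∪ {p : X × X | p.1 ≠ p.2} := by
    rintro ⟨x, y⟩ hx
    by_cases h : x = y
    · left; simpa [← h] using hx
    · right; exact h
  rw [tsub_le_iff_right, hm1, hm2, add_comm]
  exact (measure_mono hsub).trans (measure_union_le _ _)

lemma coupling_prob (π : Measure (X × X)) (h1 : π.map Prod.fst = μ₁) :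
    IsProbabilityMeasure π := by
  constructor
  have : (π.map Prod.fst) Set.univ = 1 := by rw [h1]; exact measure_univ
  rwa [Measure.map_apply measurable_fst MeasurableSet.univ, Set.preimage_univ] at this

lemma exists_max_coupling {A : Set X} (hA : MeasurableSet A)
    (hA1 : ∀ t, MeasurableSet t → t ⊆ A → μ₂ t ≤ μ₁ t)
    (hA2 : ∀ t, MeasurableSet t → t ⊆ Aᶜ → μ₁ t ≤ μ₂ t) :
    ∃ π : Measure (X × X), π.map Prod.fst = μ₁ ∧ π.map Prod.snd = μ₂ ∧
      π {p : X × X | p.1 ≠ p.2} ≤ μ₁ A - μ₂ A := by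
  set ν : Measure X := μ₂.restrict A + μ₁.restrict Aᶜ with hν
  have hν₁ : ν ≤ μ₁ := by
    refine Measure.le_iff.2 fun s hs => ?_
    rw [hν, Measure.add_apply, Measure.restrict_apply hs, Measure.restrict_apply hs]
    calc μ₂ (s ∩ A) + μ₁ (s ∩ Aᶜ)
        ≤ μ₁ (s ∩ A) + μ₁ (s ∩ Aᶜ) := by
          gcongr ?_ + _
          exact hA1 _ (hs.inter hA) Set.inter_subset_right
      _ = μ₁ s := by
          rw [show s ∩ Aᶜ = s \ A from (Set.diff_eq s A).symm]
          exact measure_inter_add_diff s hA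
  have hν₂ : ν ≤ μ₂ := by
    refine Measure.le_iff.2 fun s hs => ?_
    rw [hν, Measure.add_apply, Measure.restrict_apply hs, Measure.restrict_apply hs]
    calc μ₂ (s ∩ A) + μ₁ (s ∩ Aᶜ)
        ≤ μ₂ (s ∩ A) + μ₂ (s ∩ Aᶜ) := by
          gcongr _ + ?_
          exact hA2 _ (hs.inter hA.compl) Set.inter_subset_right
      _ = μ₂ s := by
          rw [show s ∩ Aᶜ = s \ A from (Set.diff_eq s A).symm]
          exact measure_inter_add_diff s hA
  set ρ₁ : Measure X := μ₁ - ν with hρ₁def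
  set ρ₂ : Measure X := μ₂ - ν with hρ₂def
  have hρ₁add : ρ₁ + ν = μ₁ := Measure.sub_add_cancel_of_le hν₁
  have hρ₂add : ρ₂ + ν = μ₂ := Measure.sub_add_cancel_of_le hν₂
  have hρ₁fin : IsFiniteMeasure ρ₁ := isFiniteMeasure_of_le μ₁ Measure.sub_le
  have hρ₂fin : IsFiniteMeasure ρ₂ := isFiniteMeasure_of_le μ₂ Measure.sub_le
  set t : ℝ≥0∞ := μ₁ A - μ₂ A with ht
  have hμ₂A : μ₂ A ≤ μ₁ A := hA1 A hA (subset_refl _)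
  have htν : t + ν Set.univ = μ₁ Set.univ := by
    simp only [hν, Measure.add_apply, Measure.restrict_apply MeasurableSet.univ,
      Set.univ_inter]
    rw [ht, ← add_assoc, tsub_add_cancel_of_le hμ₂A]
    exact measure_add_measure_compl hA
  have hνfin : ν Set.univ ≠ ∞ := measure_ne_top ν _
  have hρ₁univ : ρ₁ Set.univ = t := by
    have h := congrArg (fun m : Measure X => m Set.univ) hρ₁add
    simp only [Measure.add_apply] at h
    rw [← htν] at h
    have h2 := congrArg (fun z => z - ν Set.univ) h
    simpa [ENNReal.add_sub_cancel_right hνfin] using h2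
  have hρ₂univ : ρ₂ Set.univ = t := by
    have h := congrArg (fun m : Measure X => m Set.univ) hρ₂add
    simp only [Measure.add_apply] at h
    have h2 : μ₂ Set.univ = μ₁ Set.univ := by simp
    rw [h2, ← htν] at h
    have h3 := congrArg (fun z => z - ν Set.univ) h
    simpa [ENNReal.add_sub_cancel_right hνfin] using h3
  have htfin : t ≠ ∞ := by
    rw [ht]
    exact (tsub_le_self.trans_lt (measure_lt_top μ₁ A)).ne
  have hdiag : Measurable fun x : X => (x, x) := measurable_id.prodMk measurable_id
  refine ⟨ν.map (fun x => (x, x)) + t⁻¹ • (ρ₁.prod ρ₂), ?_, ?_, ?_⟩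
  · rw [Measure.map_add _ _ measurable_fst, Measure.map_smul,
      Measure.map_map measurable_fst hdiag, Measure.map_fst_prod, hρ₂univ]
    have hcomp : (Prod.fst ∘ fun x : X => (x, x)) = id := rfl
    rw [hcomp, Measure.map_id, smul_smul]
    have hsm : (t⁻¹ * t) • ρ₁ = ρ₁ := by
      rcases eq_or_ne t 0 with h0 | h0
      · have : ρ₁ = 0 := by
          rw [← Measure.measure_univ_eq_zero, hρ₁univ, h0]
        rw [this]; simp
      · rw [ENNReal.inv_mul_cancel h0 htfin, one_smul]
    rw [hsm, add_comm]
    exact hρ₁add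
  · rw [Measure.map_add _ _ measurable_snd, Measure.map_smul,
      Measure.map_map measurable_snd hdiag, Measure.map_snd_prod, hρ₁univ]
    have hcomp : (Prod.snd ∘ fun x : X => (x, x)) = id := rfl
    rw [hcomp, Measure.map_id, smul_smul]
    have hsm : (t⁻¹ * t) • ρ₂ = ρ₂ := by
      rcases eq_or_ne t 0 with h0 | h0
      · have : ρ₂ = 0 := by
          rw [← Measure.measure_univ_eq_zero, hρ₂univ, h0]
        rw [this]; simp
      · rw [ENNReal.inv_mul_cancel h0 htfin, one_smul]
    rw [hsm, add_comm]
    exact hρ₂add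
  · have hD : MeasurableSet {p : X × X | p.1 ≠ p.2} :=
      isClosed_diagonal.measurableSet.compl
    rw [Measure.add_apply, Measure.smul_apply, Measure.map_apply hdiag hD]
    have hpre : ((fun x : X => (x, x)) ⁻¹' {p : X × X | p.1 ≠ p.2}) = ∅ := by
      ext x; simp
    rw [hpre, measure_empty, zero_add, smul_eq_mul]
    calc t⁻¹ * (ρ₁.prod ρ₂) {p : X × X | p.1 ≠ p.2}
        ≤ t⁻¹ * (ρ₁.prod ρ₂) Set.univ := by
          gcongr
          exact Set.subset_univ _
      _ = t⁻¹ * (t * t) := by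
          rw [← Set.univ_prod_univ, Measure.prod_prod, hρ₁univ, hρ₂univ]
      _ ≤ t := by
          rcases eq_or_ne t 0 with h0 | h0
          · simp [h0]
          · rw [← mul_assoc, ENNReal.inv_mul_cancel h0 htfin, one_mul]

end Coupling

/-- Corollary 3.5 of Hairer–Mattingly: for a totally separating nondecreasing system
of bounded continuous pseudo-metrics `d_n ≤ 1` with `d_n(x,y) → 1` off the diagonal,
the transport distances `‖μ₁ - μ₂‖_{d_n}` converge to the total variation distance,
realized as the transport distance for the discrete metric `1_{x ≠ y}`. -/
theorem transport_distances_tendsto_tv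
    {X : Type*} [MetricSpace X] [TopologicalSpace.SeparableSpace X] [CompleteSpace X]
    [MeasurableSpace X] [BorelSpace X]
    (μ₁ μ₂ : Measure X) [IsProbabilityMeasure μ₁] [IsProbabilityMeasure μ₂]
    (d : ℕ → X → X → ℝ)
    (hd_cont : ∀ n, Continuous fun p : X × X => d n p.1 p.2)
    (hd_nonneg : ∀ n x y, 0 ≤ d n x y)
    (hd_refl : ∀ n x, d n x x = 0)
    (hd_symm : ∀ n x y, d n x y = d n y x)
    (hd_tri : ∀ n x y z, d n x z ≤ d n x y + d n y z)
    (hd_le_one : ∀ n x y, d n x y ≤ 1)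
    (hd_mono : ∀ n x y, d n x y ≤ d (n + 1) x y)
    (hd_sep : ∀ x y, x ≠ y → Tendsto (fun n => d n x y) atTop (nhds 1)) :
    Tendsto
      (fun n => sInf {r : ℝ | ∃ π : Measure (X × X),
        π.map Prod.fst = μ₁ ∧ π.map Prod.snd = μ₂ ∧
        r = ∫ p, d n p.1 p.2 ∂π})
      atTop
      (nhds (sInf {r : ℝ | ∃ π : Measure (X × X),
        π.map Prod.fst = μ₁ ∧ π.map Prod.snd = μ₂ ∧
        r = (π {p | p.1 ≠ p.2}).toReal})) := by
  haveI : SecondCountableTopology X := UniformSpace.secondCountable_of_separable X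
  obtain ⟨A, hA, hA1, hA2⟩ := hahn_decomposition (μ := μ₁) (ν := μ₂)
  set t : ℝ≥0∞ := μ₁ A - μ₂ A with ht_def
  have htfin : t ≠ ∞ := (tsub_le_self.trans_lt (measure_lt_top μ₁ A)).ne
  set ttr : ℝ := t.toReal with httr
  obtain ⟨π₀, hπ₀1, hπ₀2, hπ₀D⟩ := exists_max_coupling μ₁ μ₂ hA hA1 hA2
  haveI hπ₀prob : IsProbabilityMeasure π₀ := coupling_prob μ₁ π₀ hπ₀1
  have hD : MeasurableSet {p : X × X | p.1 ≠ p.2} :=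
    isClosed_diagonal.measurableSet.compl
  -- the target set and its infimum
  set S : Set ℝ := {r : ℝ | ∃ π : Measure (X × X),
      π.map Prod.fst = μ₁ ∧ π.map Prod.snd = μ₂ ∧
      r = (π {p | p.1 ≠ p.2}).toReal} with hS_def
  have hS_lb : ∀ r ∈ S, ttr ≤ r := by
    rintro r ⟨π, h1, h2, rfl⟩
    haveI := coupling_prob μ₁ π h1
    exact ENNReal.toReal_mono (measure_ne_top π _) (coupling_lower μ₁ μ₂ hA π h1 h2)
  have hS_mem : (π₀ {p : X × X | p.1 ≠ p.2}).toReal ∈ S := ⟨π₀, hπ₀1, hπ₀2, rfl⟩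
  have hS_mem_le : (π₀ {p : X × X | p.1 ≠ p.2}).toReal ≤ ttr :=
    ENNReal.toReal_mono htfin hπ₀D
  have hSinf : sInf S = ttr := by
    refine le_antisymm ?_ (le_csInf ⟨_, hS_mem⟩ hS_lb)
    exact (csInf_le ⟨ttr, hS_lb⟩ hS_mem).trans hS_mem_le
  rw [hSinf]
  -- basic facts about the approximating sets
  set Sn : ℕ → Set ℝ := fun n => {r : ℝ | ∃ π : Measure (X × X),
      π.map Prod.fst = μ₁ ∧ π.map Prod.snd = μ₂ ∧
      r = ∫ p, d n p.1 p.2 ∂π} with hSn_def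
  have hint : ∀ n (π : Measure (X × X)), IsProbabilityMeasure π →
      Integrable (fun p : X × X => d n p.1 p.2) π := by
    intro n π hπ
    refine Integrable.mono' (integrable_const 1) (hd_cont n).aestronglyMeasurable ?_
    filter_upwards with p
    rw [Real.norm_eq_abs, abs_of_nonneg (hd_nonneg n p.1 p.2)]
    exact hd_le_one n p.1 p.2
  have hSn_lb : ∀ n r, r ∈ Sn n → 0 ≤ r := by
    rintro n r ⟨π, h1, h2, rfl⟩
    exact integral_nonneg fun p => hd_nonneg n p.1 p.2
  have hSn_bdd : ∀ n, BddBelow (Sn n) := fun n => ⟨0, fun r hr => hSn_lb n r hr⟩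
  have hint_le : ∀ n (π : Measure (X × X)) (hπ : IsProbabilityMeasure π),
      ∫ p, d n p.1 p.2 ∂π ≤ (π {p : X × X | p.1 ≠ p.2}).toReal := by
    intro n π hπ
    have h2 : Integrable ({p : X × X | p.1 ≠ p.2}.indicator fun _ => (1:ℝ)) π :=
      (integrable_const 1).indicator hD
    have hmono : ∀ p : X × X, d n p.1 p.2 ≤
        ({p : X × X | p.1 ≠ p.2}.indicator fun _ => (1:ℝ)) p := by
      intro p
      by_cases h : p.1 = p.2
      · have : d n p.1 p.2 = 0 := by rw [h]; exact hd_refl n p.2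
        rw [this]
        exact Set.indicator_apply_nonneg fun _ => by norm_num
      · have hp : p ∈ {p : X × X | p.1 ≠ p.2} := h
        rw [Set.indicator_of_mem hp]
        exact hd_le_one n p.1 p.2
    have := integral_mono (hint n π hπ) h2 hmono
    rwa [integral_indicator_const (1:ℝ) hD, smul_eq_mul, mul_one] at this
  have hLn_le : ∀ n, sInf (Sn n) ≤ ttr := by
    intro n
    have hmem : (∫ p, d n p.1 p.2 ∂π₀) ∈ Sn n := ⟨π₀, hπ₀1, hπ₀2, rfl⟩
    exact (csInf_le (hSn_bdd n) hmem).trans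
      ((hint_le n π₀ hπ₀prob).trans hS_mem_le)
  -- the key lower bound
  have hmonod : ∀ x y, Monotone fun n => d n x y := fun x y =>
    monotone_nat_of_le_succ fun n => hd_mono n x y
  have key : ∀ ε : ℝ, 0 < ε → ∃ N : ℕ, ∀ n ≥ N, ttr - 3 * ε ≤ sInf (Sn n) := by
    intro ε hε
    have hδ : (ENNReal.ofReal ε) ≠ 0 := by
      simp [ENNReal.ofReal_eq_zero, not_le, hε]
    obtain ⟨K, hKA, hKc, hKμ⟩ := exists_compact_subset_measure μ₁ hA hδ
    obtain ⟨K', hK'A, hK'c, hK'μ⟩ := exists_compact_subset_measure μ₂ hA.compl hδ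
    -- uniform separation on K ×ˢ K'
    have hcover : (K ×ˢ K' : Set (X × X)) ⊆ ⋃ n, {p : X × X | 1 - ε < d n p.1 p.2} := by
      rintro ⟨x, y⟩ ⟨hx, hy⟩
      have hne : x ≠ y := fun h => (hK'A hy) (by rw [← h]; exact hKA hx)
      have := (hd_sep x y hne).eventually (eventually_gt_nhds (by linarith : (1:ℝ) - ε < 1))
      obtain ⟨n, hn⟩ := this.exists
      exact Set.mem_iUnion.2 ⟨n, hn⟩
    obtain ⟨tfin, htfin2⟩ := (hKc.prod hK'c).elim_finite_subcover
      (fun n => {p : X × X | 1 - ε < d n p.1 p.2})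
      (fun n => isOpen_lt continuous_const (hd_cont n)) hcover
    set N := tfin.sup id with hN
    have hsep_unif : ∀ n ≥ N, ∀ x ∈ K, ∀ y ∈ K', 1 - ε ≤ d n x y := by
      intro n hn x hx y hy
      obtain ⟨i, hi, hpi⟩ := Set.mem_iUnion₂.1 (htfin2 (Set.mk_mem_prod hx hy))
      have hiN : i ≤ n := le_trans (Finset.le_sup (f := id) hi) hn
      exact le_trans hpi.le (hmonod x y hiN)
    refine ⟨N, fun n hn => ?_⟩
    refine le_csInf ⟨_, ⟨π₀, hπ₀1, hπ₀2, rfl⟩⟩ ?_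
    rintro r ⟨π, h1, h2, rfl⟩
    haveI hπprob : IsProbabilityMeasure π := coupling_prob μ₁ π h1
    set g : X → ℝ := gfun (d n) K' with hg
    have hgc : Continuous g := gfun_continuous (hd_cont n) (hd_nonneg n)
      (hd_refl n) (hd_symm n) (hd_tri n)
    have hg0 : ∀ x, 0 ≤ g x := gfun_nonneg (hd_nonneg n)
    have hg1 : ∀ x, g x ≤ 1 := gfun_le_one (hd_nonneg n)
    -- integrability of g against any finite measure
    have hgint : ∀ (μ : Measure X), IsProbabilityMeasure μ → Integrable g μ := by
      intro μ hμ
      refine Integrable.mono' (integrable_const 1) hgc.aestronglyMeasurable ?_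
      filter_upwards with x
      rw [Real.norm_eq_abs, abs_of_nonneg (hg0 x)]
      exact hg1 x
    have hgfst : Integrable (fun p : X × X => g p.1) π := by
      refine Integrable.mono' (integrable_const 1)
        (hgc.comp continuous_fst).aestronglyMeasurable ?_
      filter_upwards with p
      rw [Real.norm_eq_abs, abs_of_nonneg (hg0 p.1)]
      exact hg1 p.1
    have hgsnd : Integrable (fun p : X × X => g p.2) π := by
      refine Integrable.mono' (integrable_const 1)
        (hgc.comp continuous_snd).aestronglyMeasurable ?_
      filter_upwards with p
      rw [Real.norm_eq_abs, abs_of_nonneg (hg0 p.2)]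
      exact hg1 p.2
    -- main chain of inequalities
    have step1 : ∫ x, g x ∂μ₁ - ∫ x, g x ∂μ₂ ≤ ∫ p, d n p.1 p.2 ∂π := by
      have hpt : ∀ p : X × X, g p.1 - g p.2 ≤ d n p.1 p.2 := by
        intro p
        have := gfun_lip (K' := K') (hd_nonneg n) (hd_tri n) p.1 p.2
        linarith
      have hι : ∫ p : X × X, (g p.1 - g p.2) ∂π ≤ ∫ p, d n p.1 p.2 ∂π :=
        integral_mono (hgfst.sub hgsnd) (hint n π hπprob) hpt
      rw [show ∫ p : X × X, (g p.1 - g p.2) ∂π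
          = ∫ p : X × X, g p.1 ∂π - ∫ p : X × X, g p.2 ∂π from integral_sub hgfst hgsnd] at hι
      have e1 : ∫ p : X × X, g p.1 ∂π = ∫ x, g x ∂μ₁ := by
        rw [← h1, integral_map measurable_fst.aemeasurable hgc.aestronglyMeasurable]
      have e2 : ∫ p : X × X, g p.2 ∂π = ∫ x, g x ∂μ₂ := by
        rw [← h2, integral_map measurable_snd.aemeasurable hgc.aestronglyMeasurable]
      rw [e1, e2] at hι
      exact hι
    have step2 : (1 - ε) * (μ₁ K).toReal ≤ ∫ x, g x ∂μ₁ := by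
      have hptw : ∀ x, (K.indicator fun _ => 1 - ε) x ≤ g x := by
        intro x
        by_cases hx : x ∈ K
        · rw [Set.indicator_of_mem hx]
          exact gfun_ge (hd_nonneg n) hε.le fun y hy => hsep_unif n hn x hx y hy
        · rw [Set.indicator_of_notMem hx]
          exact hg0 x
      have := integral_mono ((integrable_const (1 - ε)).indicator hKc.measurableSet)
        (hgint μ₁ inferInstance) hptw
      rwa [integral_indicator_const (1 - ε) hKc.measurableSet, smul_eq_mul, mul_comm] at this
    have step3 : ∫ x, g x ∂μ₂ ≤ (μ₂ K'ᶜ).toReal := by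
      have hptw : ∀ x, g x ≤ (K'ᶜ.indicator fun _ => (1:ℝ)) x := by
        intro x
        by_cases hx : x ∈ K'
        · rw [Set.indicator_of_notMem (by simpa using hx)]
          exact le_of_eq (gfun_zero_of_mem (hd_nonneg n) (hd_refl n) hx)
        · rw [Set.indicator_of_mem (by simpa using hx)]
          exact hg1 x
      have := integral_mono (hgint μ₂ inferInstance)
        ((integrable_const (1:ℝ)).indicator hK'c.measurableSet.compl) hptw
      rwa [integral_indicator_const (1:ℝ) hK'c.measurableSet.compl, smul_eq_mul,
        mul_one] at this
    -- real arithmetic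
    set a : ℝ := (μ₁ A).toReal with ha
    set b : ℝ := (μ₂ A).toReal with hb
    have httr_ab : ttr = a - b := by
      rw [httr, ht_def, ENNReal.toReal_sub_of_le (hA1 A hA (subset_refl _)) (measure_ne_top μ₁ A)]
    have ha1 : a ≤ 1 := by
      rw [ha]
      have : μ₁ A ≤ 1 := prob_le_one
      simpa using ENNReal.toReal_mono (by norm_num) this
    have hb0 : 0 ≤ b := ENNReal.toReal_nonneg
    have hm0 : 0 ≤ (μ₁ K).toReal := ENNReal.toReal_nonneg
    have hm1 : (μ₁ K).toReal ≤ 1 := by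
      have : μ₁ K ≤ 1 := prob_le_one
      simpa using ENNReal.toReal_mono (by norm_num) this
    have hma : a - ε ≤ (μ₁ K).toReal := by
      have h' : (μ₁ A).toReal ≤ (μ₁ K + ENNReal.ofReal ε).toReal :=
        ENNReal.toReal_mono (by finiteness) hKμ
      rw [ENNReal.toReal_add (measure_ne_top μ₁ K) ENNReal.ofReal_ne_top,
        ENNReal.toReal_ofReal hε.le] at h'
      rw [ha]; linarith
    have hcb : (μ₂ K'ᶜ).toReal ≤ b + ε := by
      have h1' : μ₂ K'ᶜ ≤ μ₂ A + ENNReal.ofReal ε := by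
        have hcompl : μ₂ K'ᶜ = μ₂ Set.univ - μ₂ K' :=
          measure_compl hK'c.measurableSet (measure_ne_top μ₂ K')
        rw [hcompl, tsub_le_iff_right]
        have huniv : μ₂ Set.univ = μ₂ A + μ₂ Aᶜ := (measure_add_measure_compl hA).symm
        rw [huniv]
        calc μ₂ A + μ₂ Aᶜ ≤ μ₂ A + (μ₂ K' + ENNReal.ofReal ε) := by gcongr
          _ = μ₂ A + ENNReal.ofReal ε + μ₂ K' := by ring
      have h2' := ENNReal.toReal_mono (by finiteness) h1'
      rwa [ENNReal.toReal_add (measure_ne_top μ₂ A) ENNReal.ofReal_ne_top,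
        ENNReal.toReal_ofReal hε.le] at h2'
    rw [httr_ab]
    have hfinal : a - b - 3 * ε ≤ (1 - ε) * (μ₁ K).toReal - (μ₂ K'ᶜ).toReal := by
      nlinarith [hm0, hm1, hma, hcb, ha1, hb0, hε.le]
    linarith [step1, step2, step3]
  -- conclude
  rw [Metric.tendsto_atTop]
  intro ε hε
  obtain ⟨N, hN⟩ := key (ε / 4) (by linarith)
  refine ⟨N, fun n hn => ?_⟩
  have h1 := hLn_le n
  have h2 := hN n hn
  rw [Real.dist_eq, abs_sub_lt_iff]
  constructor <;> linarith
end
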